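/- arXiv:cs/0207090 — 5 statements merged into one kernel-verified Lean document; each statement's English description precedes it below -/
import Mathlib

section
/- For every set of propositional formulas Γ: Γ ⊢_CL ⊥ if and only if there is a finite nonempty Δ ⊆ Ω such that Γ ⊢_CLuN Dab(Δ). -/
/-- Propositional formulas: variables, ⊥, ⊃, ∧, ∨, ≡, and paraconsistent negation ~. -/
inductive Formula : Type
  | var : ℕ → Formula
  | bot : Formula
  | imp : Formula → Formula → Formula
  | conj : Formula → Formula → Formula
  | disj : Formula → Formula → Formula
  | equiv : Formula → Formula → Formula
  | pneg : Formula → Formula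
  deriving DecidableEq

namespace Formula

/-- Classical negation: ¬A := A ⊃ ⊥. -/
def neg (A : Formula) : Formula := imp A bot

end Formula

/-- Hilbert-style derivability. `cl = false` gives CLuN (full positive classical logic,
including Peirce's law, plus ⊥ ⊃ A and A ∨ ~A, with modus ponens as only rule);
`cl = true` additionally has the axiom schema (A ∧ ~A) ⊃ B, giving CL. -/
inductive Deriv (cl : Bool) (Γ : Set Formula) : Formula → Prop
  | prem {A : Formula} : A ∈ Γ → Deriv cl Γ A
  | axK (A B : Formula) : Deriv cl Γ (A.imp (B.imp A))
  | axS (A B C : Formula) : Deriv cl Γ ((A.imp (B.imp C)).imp ((A.imp B).imp (A.imp C)))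
  | axPeirce (A B : Formula) : Deriv cl Γ (((A.imp B).imp A).imp A)
  | axAndElimL (A B : Formula) : Deriv cl Γ ((A.conj B).imp A)
  | axAndElimR (A B : Formula) : Deriv cl Γ ((A.conj B).imp B)
  | axAndIntro (A B : Formula) : Deriv cl Γ (A.imp (B.imp (A.conj B)))
  | axOrIntroL (A B : Formula) : Deriv cl Γ (A.imp (A.disj B))
  | axOrIntroR (A B : Formula) : Deriv cl Γ (B.imp (A.disj B))
  | axOrElim (A B C : Formula) : Deriv cl Γ ((A.imp C).imp ((B.imp C).imp ((A.disj B).imp C)))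
  | axIffElimL (A B : Formula) : Deriv cl Γ ((A.equiv B).imp (A.imp B))
  | axIffElimR (A B : Formula) : Deriv cl Γ ((A.equiv B).imp (B.imp A))
  | axIffIntro (A B : Formula) : Deriv cl Γ ((A.imp B).imp ((B.imp A).imp (A.equiv B)))
  | axBot (A : Formula) : Deriv cl Γ (Formula.bot.imp A)
  | axEM (A : Formula) : Deriv cl Γ (A.disj A.pneg)
  | axCL (A B : Formula) : cl = true → Deriv cl Γ ((A.conj A.pneg).imp B)
  | mp {A B : Formula} : Deriv cl Γ (A.imp B) → Deriv cl Γ A → Deriv cl Γ B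

/-- Γ ⊢_CLuN A -/
def CLuN (Γ : Set Formula) (A : Formula) : Prop := Deriv false Γ A

/-- Γ ⊢_CL A -/
def CL (Γ : Set Formula) (A : Formula) : Prop := Deriv true Γ A

/-- The set of abnormalities Ω: all formulas of the form A ∧ ~A. -/
def Omega : Set Formula := {F | ∃ A : Formula, F = A.conj A.pneg}

/-- An arbitrary (noncomputable) linear order on formulas, used only to pick a canonical
ordering of the disjuncts of a Dab-formula. -/
noncomputable instance : LinearOrder Formula :=
  @linearOrderOfSTO Formula WellOrderingRel _ (Classical.decRel _)

/-- Disjunction of a list of formulas; the empty disjunction is ⊥. -/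
def listDisj : List Formula → Formula
  | [] => Formula.bot
  | [A] => A
  | A :: B :: rest => A.disj (listDisj (B :: rest))

/-- Dab(Δ): the disjunction of the members of the finite set Δ (by convention Dab(∅) := ⊥). -/
noncomputable def Dab (Δ : Finset Formula) : Formula := listDisj (Δ.sort (· ≤ ·))

/-- Dab(Δ) is a minimal Dab-consequence of Γ: Δ is finite and nonempty, Δ ⊆ Ω,
Γ ⊢_CLuN Dab(Δ), and no nonempty Δ' ⊊ Δ has Γ ⊢_CLuN Dab(Δ'). -/
def MinDabConsequence (Γ : Set Formula) (Δ : Finset Formula) : Prop :=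
  Δ.Nonempty ∧ ↑Δ ⊆ Omega ∧ CLuN Γ (Dab Δ) ∧
    ∀ Δ' : Finset Formula, Δ'.Nonempty → Δ' ⊂ Δ → ¬ CLuN Γ (Dab Δ')

/-- U(Γ): the set of formulas unreliable with respect to Γ. -/
def U (Γ : Set Formula) : Set Formula :=
  {A | ∃ Δ : Finset Formula, MinDabConsequence Γ Δ ∧ A ∈ Δ}

namespace Deriv

theorem mono {cl : Bool} {Γ Γ' : Set Formula} {A : Formula} (hs : Γ ⊆ Γ')
    (h : Deriv cl Γ A) : Deriv cl Γ' A := by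
  induction h with
  | prem h => exact .prem (hs h)
  | axK A B => exact .axK A B
  | axS A B C => exact .axS A B C
  | axPeirce A B => exact .axPeirce A B
  | axAndElimL A B => exact .axAndElimL A B
  | axAndElimR A B => exact .axAndElimR A B
  | axAndIntro A B => exact .axAndIntro A B
  | axOrIntroL A B => exact .axOrIntroL A B
  | axOrIntroR A B => exact .axOrIntroR A B
  | axOrElim A B C => exact .axOrElim A B C
  | axIffElimL A B => exact .axIffElimL A B
  | axIffElimR A B => exact .axIffElimR A B
  | axIffIntro A B => exact .axIffIntro A B
  | axBot A => exact .axBot A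
  | axEM A => exact .axEM A
  | axCL A B h => exact .axCL A B h
  | mp _ _ ih1 ih2 => exact ih1.mp ih2

theorem lift {Γ : Set Formula} {A : Formula}
    (h : Deriv false Γ A) : Deriv true Γ A := by
  induction h with
  | prem h => exact .prem h
  | axK A B => exact .axK A B
  | axS A B C => exact .axS A B C
  | axPeirce A B => exact .axPeirce A B
  | axAndElimL A B => exact .axAndElimL A B
  | axAndElimR A B => exact .axAndElimR A B
  | axAndIntro A B => exact .axAndIntro A B
  | axOrIntroL A B => exact .axOrIntroL A B
  | axOrIntroR A B => exact .axOrIntroR A B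
  | axOrElim A B C => exact .axOrElim A B C
  | axIffElimL A B => exact .axIffElimL A B
  | axIffElimR A B => exact .axIffElimR A B
  | axIffIntro A B => exact .axIffIntro A B
  | axBot A => exact .axBot A
  | axEM A => exact .axEM A
  | axCL A B h => exact .axCL A B rfl
  | mp _ _ ih1 ih2 => exact ih1.mp ih2

theorem impId (cl : Bool) (Γ : Set Formula) (A : Formula) :
    Deriv cl Γ (A.imp A) :=
  ((Deriv.axS A (A.imp A) A).mp (Deriv.axK A (A.imp A))).mp (Deriv.axK A A)

/-- Deduction theorem. -/
theorem ded {cl : Bool} {Γ : Set Formula} {A B : Formula}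
    (h : Deriv cl (insert A Γ) B) : Deriv cl Γ (A.imp B) := by
  induction h with
  | prem h =>
    rcases h with rfl | h
    · exact impId cl Γ _
    · exact (Deriv.axK _ _).mp (.prem h)
  | axK X Y => exact (Deriv.axK _ _).mp (.axK X Y)
  | axS X Y Z => exact (Deriv.axK _ _).mp (.axS X Y Z)
  | axPeirce X Y => exact (Deriv.axK _ _).mp (.axPeirce X Y)
  | axAndElimL X Y => exact (Deriv.axK _ _).mp (.axAndElimL X Y)
  | axAndElimR X Y => exact (Deriv.axK _ _).mp (.axAndElimR X Y)
  | axAndIntro X Y => exact (Deriv.axK _ _).mp (.axAndIntro X Y)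
  | axOrIntroL X Y => exact (Deriv.axK _ _).mp (.axOrIntroL X Y)
  | axOrIntroR X Y => exact (Deriv.axK _ _).mp (.axOrIntroR X Y)
  | axOrElim X Y Z => exact (Deriv.axK _ _).mp (.axOrElim X Y Z)
  | axIffElimL X Y => exact (Deriv.axK _ _).mp (.axIffElimL X Y)
  | axIffElimR X Y => exact (Deriv.axK _ _).mp (.axIffElimR X Y)
  | axIffIntro X Y => exact (Deriv.axK _ _).mp (.axIffIntro X Y)
  | axBot X => exact (Deriv.axK _ _).mp (.axBot X)
  | axEM X => exact (Deriv.axK _ _).mp (.axEM X)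
  | axCL X Y h => exact (Deriv.axK _ _).mp (.axCL X Y h)
  | mp _ _ ih1 ih2 => exact ((Deriv.axS _ _ _).mp ih1).mp ih2

theorem impTrans {cl : Bool} {Γ : Set Formula} {A B C : Formula}
    (h1 : Deriv cl Γ (A.imp B)) (h2 : Deriv cl Γ (B.imp C)) :
    Deriv cl Γ (A.imp C) :=
  ded ((h2.mono (Set.subset_insert _ _)).mp
    ((h1.mono (Set.subset_insert _ _)).mp (.prem (Set.mem_insert _ _))))

theorem orCases {cl : Bool} {Γ : Set Formula} {A B C : Formula}
    (h : Deriv cl Γ (A.disj B)) (h1 : Deriv cl Γ (A.imp C))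
    (h2 : Deriv cl Γ (B.imp C)) : Deriv cl Γ C :=
  (((Deriv.axOrElim A B C).mp h1).mp h2).mp h

theorem orImp {cl : Bool} {Γ : Set Formula} {A B C : Formula}
    (h1 : Deriv cl Γ (A.imp C)) (h2 : Deriv cl Γ (B.imp C)) :
    Deriv cl Γ ((A.disj B).imp C) :=
  ((Deriv.axOrElim A B C).mp h1).mp h2

end Deriv

theorem listDisj_cons_imp (cl : Bool) (Γ : Set Formula) (x : Formula) (l : List Formula) :
    Deriv cl Γ ((listDisj (x :: l)).imp (x.disj (listDisj l))) := by
  cases l with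
  | nil => exact Deriv.axOrIntroL x Formula.bot
  | cons y t => exact Deriv.impId cl Γ _

theorem mem_imp_listDisj {cl : Bool} {Γ : Set Formula} {x : Formula} {l : List Formula}
    (h : x ∈ l) : Deriv cl Γ (x.imp (listDisj l)) := by
  induction l with
  | nil => cases h
  | cons a t ih =>
    rcases List.mem_cons.mp h with rfl | h
    · cases t with
      | nil => exact Deriv.impId cl Γ x
      | cons y r => exact Deriv.axOrIntroL x _
    · cases t with
      | nil => cases h
      | cons y r => exact Deriv.impTrans (ih h) (Deriv.axOrIntroR a _)

theorem listDisj_imp {cl : Bool} {Γ : Set Formula} {C : Formula} {l : List Formula}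
    (h : ∀ x ∈ l, Deriv cl Γ (x.imp C)) : Deriv cl Γ ((listDisj l).imp C) := by
  induction l with
  | nil => exact Deriv.axBot C
  | cons a t ih =>
    exact Deriv.impTrans (listDisj_cons_imp cl Γ a t)
      (Deriv.orImp (h a (List.mem_cons_self (a := a) (l := t)))
        (ih fun x hx => h x (List.mem_cons_of_mem a hx)))

theorem listDisj_mono {cl : Bool} {Γ : Set Formula} {l m : List Formula}
    (h : ∀ x ∈ l, x ∈ m) : Deriv cl Γ ((listDisj l).imp (listDisj m)) :=
  listDisj_imp fun x hx => mem_imp_listDisj (h x hx)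

theorem clun_of_cl {Γ : Set Formula} {A : Formula} (h : Deriv true Γ A) :
    ∃ l : List Formula, (∀ x ∈ l, x ∈ Omega) ∧ Deriv false Γ (listDisj (A :: l)) := by
  induction h with
  | prem h => exact ⟨[], by simp, .prem h⟩
  | axK A B => exact ⟨[], by simp, .axK A B⟩
  | axS A B C => exact ⟨[], by simp, .axS A B C⟩
  | axPeirce A B => exact ⟨[], by simp, .axPeirce A B⟩
  | axAndElimL A B => exact ⟨[], by simp, .axAndElimL A B⟩
  | axAndElimR A B => exact ⟨[], by simp, .axAndElimR A B⟩
  | axAndIntro A B => exact ⟨[], by simp, .axAndIntro A B⟩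
  | axOrIntroL A B => exact ⟨[], by simp, .axOrIntroL A B⟩
  | axOrIntroR A B => exact ⟨[], by simp, .axOrIntroR A B⟩
  | axOrElim A B C => exact ⟨[], by simp, .axOrElim A B C⟩
  | axIffElimL A B => exact ⟨[], by simp, .axIffElimL A B⟩
  | axIffElimR A B => exact ⟨[], by simp, .axIffElimR A B⟩
  | axIffIntro A B => exact ⟨[], by simp, .axIffIntro A B⟩
  | axBot A => exact ⟨[], by simp, .axBot A⟩
  | axEM A => exact ⟨[], by simp, .axEM A⟩
  | axCL A B _ =>
    refine ⟨[A.conj A.pneg], by simp [Omega], ?_⟩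
    -- goal : Deriv false Γ (((A.conj A.pneg).imp B).disj (A.conj A.pneg))
    set X := A.conj A.pneg with hX
    set G := (X.imp B).disj X with hG
    have key : Deriv false Γ ((G.imp Formula.bot).imp G) := by
      apply Deriv.ded
      have hXB : Deriv false (insert (G.imp Formula.bot) Γ) (X.imp B) := by
        apply Deriv.ded
        have hx : Deriv false (insert X (insert (G.imp Formula.bot) Γ)) X :=
          .prem (Set.mem_insert _ _)
        have hg : Deriv false (insert X (insert (G.imp Formula.bot) Γ)) G :=
          (Deriv.axOrIntroR (X.imp B) X).mp hx
        have hbot := (Deriv.prem (Set.mem_insert_of_mem _ (Set.mem_insert _ _))).mp hg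
        exact (Deriv.axBot B).mp hbot
      exact (Deriv.axOrIntroL (X.imp B) X).mp hXB
    exact (Deriv.axPeirce G Formula.bot).mp key
  | mp hAB hA ihAB ihA =>
    obtain ⟨l1, hl1, d1⟩ := ihAB
    obtain ⟨l2, hl2, d2⟩ := ihA
    rename_i A B
    refine ⟨l1 ++ l2, ?_, ?_⟩
    · intro x hx
      rcases List.mem_append.mp hx with h | h
      · exact hl1 x h
      · exact hl2 x h
    · set D := listDisj (B :: (l1 ++ l2)) with hD
      have hBD : Deriv false Γ (B.imp D) :=
        mem_imp_listDisj (List.mem_cons_self (a := B) (l := l1 ++ l2))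
      have h1 : Deriv false Γ ((A.imp B).disj (listDisj l1)) :=
        (listDisj_cons_imp false Γ _ l1).mp d1
      have c2 : Deriv false Γ ((listDisj l1).imp D) :=
        listDisj_mono fun x hx =>
          List.mem_cons_of_mem _ (List.mem_append.mpr (Or.inl hx))
      have c1 : Deriv false Γ ((A.imp B).imp D) := by
        apply Deriv.ded
        have h2 : Deriv false (insert (A.imp B) Γ) (A.disj (listDisj l2)) :=
          ((listDisj_cons_imp false _ _ l2).mp
            (d2.mono (Set.subset_insert _ _)))
        refine Deriv.orCases h2 ?_ ?_
        · apply Deriv.ded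
          have hB : Deriv false (insert A (insert (A.imp B) Γ)) B :=
            (Deriv.prem (Set.mem_insert_of_mem _ (Set.mem_insert _ _))).mp
              (.prem (Set.mem_insert _ _))
          exact (hBD.mono (fun x hx =>
            Set.mem_insert_of_mem _ (Set.mem_insert_of_mem _ hx))).mp hB
        · exact listDisj_mono fun x hx =>
            List.mem_cons_of_mem _ (List.mem_append.mpr (Or.inr hx))
      exact Deriv.orCases h1 c1 c2

/-- Γ ⊢_CL ⊥ iff there is a finite nonempty Δ ⊆ Ω such that Γ ⊢_CLuN Dab(Δ). -/
theorem cl_bot_iff_dab (Γ : Set Formula) :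
    CL Γ Formula.bot ↔
      ∃ Δ : Finset Formula, Δ.Nonempty ∧ ↑Δ ⊆ Omega ∧ CLuN Γ (Dab Δ) := by
  constructor
  · intro h
    obtain ⟨l, hl, hd⟩ := clun_of_cl h
    cases l with
    | nil =>
      -- Γ ⊢_CLuN ⊥
      refine ⟨{(Formula.var 0).conj (Formula.var 0).pneg}, Finset.singleton_nonempty _,
        by simp [Omega], ?_⟩
      have hbot : Deriv false Γ Formula.bot := hd
      have : Dab {(Formula.var 0).conj (Formula.var 0).pneg} =
          (Formula.var 0).conj (Formula.var 0).pneg := by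
        simp [Dab, listDisj]
      rw [CLuN, this]
      exact (Deriv.axBot _).mp hbot
    | cons x t =>
      have hxt : Deriv false Γ (listDisj (x :: t)) :=
        Deriv.orCases ((listDisj_cons_imp false Γ _ _).mp hd)
          (Deriv.axBot _) (Deriv.impId _ _ _)
      refine ⟨(x :: t).toFinset, by simp, ?_, ?_⟩
      · intro y hy
        simp only [List.coe_toFinset, Set.mem_setOf_eq] at hy
        exact hl y hy
      · refine (listDisj_mono ?_).mp hxt
        intro y hy
        rw [Finset.mem_sort]
        exact List.mem_toFinset.mpr hy
  · rintro ⟨Δ, _, hΩ, hd⟩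
    have hlift : Deriv true Γ (Dab Δ) := Deriv.lift hd
    have himp : Deriv true Γ ((Dab Δ).imp Formula.bot) := by
      apply listDisj_imp
      intro x hx
      have hxΩ : x ∈ Omega := hΩ (Finset.mem_coe.mpr ((Finset.mem_sort _).mp hx))
      obtain ⟨A, rfl⟩ := hxΩ
      exact Deriv.axCL A Formula.bot rfl
    exact himp.mp hlift
end

section
/- (p∧q) ∧ ~(p∧q) ⊬_CLuN (p ∧ ~p) ∨ (q ∧ ~q): the formula (p ∧ ~p) ∨ (q ∧ ~q) is not CLuN-derivable from the single premise (p∧q) ∧ ~(p∧q), where p and q are distinct propositional variables. -/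
/-- Boolean CLuN-valuation: all variables true, `~A` true iff `f A` or `A` false. -/
def evalF (f : Formula → Bool) : Formula → Bool
  | .var _ => true
  | .bot => false
  | .imp A B => !(evalF f A) || evalF f B
  | .conj A B => evalF f A && evalF f B
  | .disj A B => evalF f A || evalF f B
  | .equiv A B => evalF f A == evalF f B
  | .pneg A => f A || !(evalF f A)

theorem evalF_sound (f : Formula → Bool) (Γ : Set Formula)
    (hΓ : ∀ B ∈ Γ, evalF f B = true) {A : Formula}
    (h : Deriv false Γ A) : evalF f A = true := by
  induction h with
  | prem hA => exact hΓ _ hA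
  | mp _ _ ih1 ih2 =>
      simp only [evalF] at ih1
      rcases Bool.or_eq_true_iff.mp ih1 with h' | h'
      · simp [ih2] at h'
      · exact h'
  | axCL A B h => exact absurd h (by simp)
  | axK A B => simp only [evalF]; cases evalF f A <;> cases evalF f B <;> simp
  | axS A B C => simp only [evalF]; cases evalF f A <;> cases evalF f B <;> cases evalF f C <;> simp
  | axPeirce A B => simp only [evalF]; cases evalF f A <;> cases evalF f B <;> simp
  | axAndElimL A B => simp only [evalF]; cases evalF f A <;> cases evalF f B <;> simp
  | axAndElimR A B => simp only [evalF]; cases evalF f A <;> cases evalF f B <;> simp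
  | axAndIntro A B => simp only [evalF]; cases evalF f A <;> cases evalF f B <;> simp
  | axOrIntroL A B => simp only [evalF]; cases evalF f A <;> cases evalF f B <;> simp
  | axOrIntroR A B => simp only [evalF]; cases evalF f A <;> cases evalF f B <;> simp
  | axOrElim A B C => simp only [evalF]; cases evalF f A <;> cases evalF f B <;> cases evalF f C <;> simp
  | axIffElimL A B => simp only [evalF]; cases evalF f A <;> cases evalF f B <;> simp
  | axIffElimR A B => simp only [evalF]; cases evalF f A <;> cases evalF f B <;> simp
  | axIffIntro A B => simp only [evalF]; cases evalF f A <;> cases evalF f B <;> simp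
  | axBot A => simp [evalF]
  | axEM A => simp only [evalF]; cases evalF f A <;> simp

/-- (p∧q) ∧ ~(p∧q) ⊬_CLuN (p ∧ ~p) ∨ (q ∧ ~q), for distinct variables p, q. -/
theorem not_clun_distribute_abnormality (p q : ℕ) (hpq : p ≠ q) :
    ¬ CLuN
      {((Formula.var p).conj (Formula.var q)).conj
        ((Formula.var p).conj (Formula.var q)).pneg}
      (((Formula.var p).conj (Formula.var p).pneg).disj
        ((Formula.var q).conj (Formula.var q).pneg)) := by
  intro h
  have := evalF_sound
    (fun A => decide (A = (Formula.var p).conj (Formula.var q)))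
    _ (by rintro B rfl; simp [evalF]) h
  simp [evalF, hpq] at this
end

section
/- For every set of propositional formulas Γ and all finite nonempty Θ, Λ ⊆ Ω: if Γ ⊢_CLuN Dab(Θ ∪ Λ) and Γ ⊬_CLuN Dab(Λ), then there exist a nonempty Θ' ⊆ Θ and a (possibly empty) Λ' ⊆ Λ such that Dab(Θ' ∪ Λ') is a minimal Dab-consequence of Γ; consequently Θ ∩ U(Γ) ≠ ∅. -/
section Aux

variable {cl : Bool} {Γ : Set Formula}

lemma deriv_imp_id (A : Formula) : Deriv cl Γ (A.imp A) :=
  Deriv.mp (Deriv.mp (Deriv.axS A (A.imp A) A) (Deriv.axK A (A.imp A))) (Deriv.axK A A)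

lemma deriv_imp_trans {A B C : Formula} (h1 : Deriv cl Γ (A.imp B))
    (h2 : Deriv cl Γ (B.imp C)) : Deriv cl Γ (A.imp C) :=
  Deriv.mp (Deriv.mp (Deriv.axS A B C) (Deriv.mp (Deriv.axK (B.imp C) A) h2)) h1

lemma listDisj_imp_s7 {B : Formula} : ∀ (l : List Formula),
    (∀ a ∈ l, Deriv cl Γ (a.imp B)) → Deriv cl Γ ((listDisj l).imp B)
  | [], _ => Deriv.axBot B
  | [a], h => h a (by simp)
  | a :: b :: rest, h => by
    have ih := listDisj_imp_s7 (b :: rest) (fun x hx => h x (List.mem_cons_of_mem _ hx))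
    exact Deriv.mp (Deriv.mp (Deriv.axOrElim a (listDisj (b :: rest)) B)
      (h a (by simp))) ih

lemma imp_listDisj {a : Formula} : ∀ (l : List Formula), a ∈ l →
    Deriv cl Γ (a.imp (listDisj l))
  | [], h => by simp at h
  | [b], h => by
    simp at h; subst h; exact deriv_imp_id a
  | b :: c :: rest, h => by
    rcases List.mem_cons.mp h with h | h
    · subst h; exact Deriv.axOrIntroL a (listDisj (c :: rest))
    · exact deriv_imp_trans (imp_listDisj (c :: rest) h)
        (Deriv.axOrIntroR b (listDisj (c :: rest)))

lemma dab_mono {Δ Δ' : Finset Formula} (h : Δ ⊆ Δ') (hd : Deriv cl Γ (Dab Δ)) :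
    Deriv cl Γ (Dab Δ') := by
  refine Deriv.mp (listDisj_imp_s7 _ fun a ha => ?_) hd
  exact imp_listDisj _ ((Finset.mem_sort _).mpr (h ((Finset.mem_sort _).mp ha)))

end Aux

/-- If Γ ⊢_CLuN Dab(Θ ∪ Λ) and Γ ⊬_CLuN Dab(Λ), then there are a nonempty Θ' ⊆ Θ and a
(possibly empty) Λ' ⊆ Λ such that Dab(Θ' ∪ Λ') is a minimal Dab-consequence of Γ;
consequently Θ ∩ U(Γ) ≠ ∅. -/
theorem min_dab_exists_of_dab_not_transferred (Γ : Set Formula) (Θ Λ : Finset Formula)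
    (hΘne : Θ.Nonempty) (hΛne : Λ.Nonempty) (hΘ : ↑Θ ⊆ Omega) (hΛ : ↑Λ ⊆ Omega)
    (h1 : CLuN Γ (Dab (Θ ∪ Λ))) (h2 : ¬ CLuN Γ (Dab Λ)) :
    (∃ Θ' Λ' : Finset Formula, Θ'.Nonempty ∧ Θ' ⊆ Θ ∧ Λ' ⊆ Λ ∧
      MinDabConsequence Γ (Θ' ∪ Λ')) ∧
    (↑Θ ∩ U Γ : Set Formula) ≠ ∅ := by
  classical
  have hex : ∃ n, ∃ Δ : Finset Formula, Δ.Nonempty ∧ Δ ⊆ Θ ∪ Λ ∧ CLuN Γ (Dab Δ) ∧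
      Δ.card = n := by
    obtain ⟨a, ha⟩ := hΘne
    exact ⟨(Θ ∪ Λ).card, Θ ∪ Λ, ⟨a, Finset.mem_union_left _ ha⟩, le_refl _, h1, rfl⟩
  obtain ⟨Δ, hne, hsub, hder, hcard⟩ := Nat.find_spec hex
  have hmin : ∀ Δ' : Finset Formula, Δ'.Nonempty → Δ' ⊂ Δ → ¬ CLuN Γ (Dab Δ') := by
    intro Δ' hne' hss hder'
    exact Nat.find_min hex (hcard ▸ Finset.card_lt_card hss)
      ⟨Δ', hne', hss.subset.trans hsub, hder', rfl⟩
  have hΔΩ : ↑Δ ⊆ Omega := by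
    intro a ha
    rcases Finset.mem_union.mp (hsub ha) with h | h
    · exact hΘ h
    · exact hΛ h
  have hmdc : MinDabConsequence Γ Δ := ⟨hne, hΔΩ, hder, hmin⟩
  have hΘ'ne : (Δ ∩ Θ).Nonempty := by
    rw [Finset.nonempty_iff_ne_empty]
    intro hemp
    apply h2
    refine dab_mono (fun a ha => ?_) hder
    rcases Finset.mem_union.mp (hsub ha) with h | h
    · exact absurd (Finset.mem_inter.mpr ⟨ha, h⟩) (by simp [hemp])
    · exact h
  have hunion : (Δ ∩ Θ) ∪ (Δ ∩ Λ) = Δ := by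
    ext a
    simp only [Finset.mem_union, Finset.mem_inter]
    constructor
    · rintro (⟨h, _⟩ | ⟨h, _⟩) <;> exact h
    · intro ha
      rcases Finset.mem_union.mp (hsub ha) with h | h
      · exact Or.inl ⟨ha, h⟩
      · exact Or.inr ⟨ha, h⟩
  constructor
  · exact ⟨Δ ∩ Θ, Δ ∩ Λ, hΘ'ne, Finset.inter_subset_right, Finset.inter_subset_right,
      by rw [hunion]; exact hmdc⟩
  · obtain ⟨a, ha⟩ := hΘ'ne
    rw [← Set.nonempty_iff_ne_empty]
    exact ⟨a, (Finset.mem_inter.mp ha).2, Δ, hmdc, (Finset.mem_inter.mp ha).1⟩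
end

section
/- Let Γ₁ = {(p∧q)∧t, ~p∨r, ~q∨s, ~p∨~q, t⊃~p}, where p, q, r, s, t are distinct propositional variables. Then there is a finite Δ ⊆ Ω with Δ ∩ U(Γ₁) = ∅ and Γ₁ ⊢_CLuN s ∨ Dab(Δ) (so s is finally ACLuN1-derivable from Γ₁), but there is no finite Δ ⊆ Ω with Δ ∩ U(Γ₁) = ∅ and Γ₁ ⊢_CLuN r ∨ Dab(Δ) (so r is not finally ACLuN1-derivable from Γ₁). -/
/-- Γ₁ = {(p∧q)∧t, ~p∨r, ~q∨s, ~p∨~q, t⊃~p}. -/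
def Gamma1 (p q r s t : ℕ) : Set Formula :=
  {((Formula.var p).conj (Formula.var q)).conj (Formula.var t),
   (Formula.var p).pneg.disj (Formula.var r),
   (Formula.var q).pneg.disj (Formula.var s),
   (Formula.var p).pneg.disj (Formula.var q).pneg,
   (Formula.var t).imp (Formula.var p).pneg}

namespace AuxCLuN

open Formula

/-- Composition of implications. -/
lemma comp {cl : Bool} {Γ : Set Formula} {A B C : Formula}
    (h1 : Deriv cl Γ (A.imp B)) (h2 : Deriv cl Γ (B.imp C)) :
    Deriv cl Γ (A.imp C) :=
  Deriv.mp (Deriv.mp (Deriv.axS A B C) (Deriv.mp (Deriv.axK (B.imp C) A) h2)) h1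

/-- A CLuN valuation: variables in `vs` are true, `~A` behaves classically except that
`~(var piv)` is true. -/
def val (piv : ℕ) (vs : List ℕ) : Formula → Bool
  | .var n => vs.contains n
  | .bot => false
  | .imp A B => !val piv vs A || val piv vs B
  | .conj A B => val piv vs A && val piv vs B
  | .disj A B => val piv vs A || val piv vs B
  | .equiv A B => val piv vs A == val piv vs B
  | .pneg A => if A = .var piv then true else !val piv vs A

lemma sound {piv : ℕ} {vs : List ℕ} {Γ : Set Formula} {A : Formula}
    (h : Deriv false Γ A) (hΓ : ∀ B ∈ Γ, val piv vs B = true) :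
    val piv vs A = true := by
  induction h with
  | prem h => exact hΓ _ h
  | axEM A =>
      by_cases hA : A = .var piv <;>
        · simp only [val, hA]
          cases hv : val piv vs A <;> simp [hv]
  | axCL A B h => exact absurd h (by simp)
  | mp h1 h2 ih1 ih2 => simp [val, ih2] at ih1; exact ih1
  | _ =>
      simp only [val]
      first
      | rfl
      | (rename_i A B; cases hA : val piv vs A <;> cases hB : val piv vs B <;> simp)

lemma val_listDisj (piv : ℕ) (vs : List ℕ) :
    ∀ L : List Formula, val piv vs (listDisj L) = L.any (val piv vs)
  | [] => by simp [listDisj, val]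
  | [A] => by simp [listDisj]
  | A :: B :: L => by
      simp [listDisj, val, val_listDisj piv vs (B :: L)]

lemma val_Dab_false (piv : ℕ) (vs : List ℕ) (Δ : Finset Formula) (hΩ : ↑Δ ⊆ Omega)
    (hp : (Formula.var piv).conj (Formula.var piv).pneg ∉ Δ) :
    val piv vs (Dab Δ) = false := by
  rw [Dab, val_listDisj]
  rw [List.any_eq_false]
  intro F hF
  have hFΔ : F ∈ Δ := (Finset.mem_sort _).mp hF
  obtain ⟨A, rfl⟩ := hΩ hFΔ
  have hA : A ≠ .var piv := by rintro rfl; exact hp hFΔ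
  simp only [val, if_neg hA]
  cases hv : val piv vs A <;> simp [hv]

end AuxCLuN

/-- s is finally ACLuN1-derivable from Γ₁ but r is not, for pairwise distinct variables
p, q, r, s, t: there is a finite Δ ⊆ Ω with Δ ∩ U(Γ₁) = ∅ and Γ₁ ⊢_CLuN s ∨ Dab(Δ),
but no finite Δ ⊆ Ω with Δ ∩ U(Γ₁) = ∅ and Γ₁ ⊢_CLuN r ∨ Dab(Δ). -/
theorem Gamma1_s_in_r_out (p q r s t : ℕ)
    (hpq : p ≠ q) (hpr : p ≠ r) (hps : p ≠ s) (hpt : p ≠ t) (hqr : q ≠ r)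
    (hqs : q ≠ s) (hqt : q ≠ t) (hrs : r ≠ s) (hrt : r ≠ t) (hst : s ≠ t) :
    (∃ Δ : Finset Formula, ↑Δ ⊆ Omega ∧ (↑Δ ∩ U (Gamma1 p q r s t) : Set Formula) = ∅ ∧
      CLuN (Gamma1 p q r s t) ((Formula.var s).disj (Dab Δ))) ∧
    ¬ (∃ Δ : Finset Formula, ↑Δ ⊆ Omega ∧ (↑Δ ∩ U (Gamma1 p q r s t) : Set Formula) = ∅ ∧
      CLuN (Gamma1 p q r s t) ((Formula.var r).disj (Dab Δ))) := by
  open Formula AuxCLuN in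
  -- abbreviations
  set Γ : Set Formula := Gamma1 p q r s t with hΓdef
  set pab : Formula := (Formula.var p).conj (Formula.var p).pneg with hpab
  set qab : Formula := (Formula.var q).conj (Formula.var q).pneg with hqab
  -- basic derivations
  have hprem1 : Deriv false Γ (((Formula.var p).conj (Formula.var q)).conj (Formula.var t)) :=
    Deriv.prem (by simp [hΓdef, Gamma1])
  have hpqd : Deriv false Γ ((Formula.var p).conj (Formula.var q)) :=
    Deriv.mp (Deriv.axAndElimL _ _) hprem1
  have hpd : Deriv false Γ (Formula.var p) := Deriv.mp (Deriv.axAndElimL _ _) hpqd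
  have hqd : Deriv false Γ (Formula.var q) := Deriv.mp (Deriv.axAndElimR _ _) hpqd
  have htd : Deriv false Γ (Formula.var t) := Deriv.mp (Deriv.axAndElimR _ _) hprem1
  have hnpd : Deriv false Γ (Formula.var p).pneg :=
    Deriv.mp (Deriv.prem (show (Formula.var t).imp (Formula.var p).pneg ∈ Γ by
      simp [hΓdef, Gamma1])) htd
  have hpabd : Deriv false Γ pab := Deriv.mp (Deriv.mp (Deriv.axAndIntro _ _) hpd) hnpd
  have hDabpab : Dab {pab} = pab := by rw [Dab, Finset.sort_singleton]; rfl
  have hDabqab : Dab {qab} = qab := by rw [Dab, Finset.sort_singleton]; rfl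
  -- {pab} is a minimal Dab-consequence
  have hmin_pab : MinDabConsequence Γ {pab} := by
    refine ⟨Finset.singleton_nonempty _, ?_, ?_, ?_⟩
    · intro x hx
      simp only [Finset.coe_singleton, Set.mem_singleton_iff] at hx
      exact hx ▸ ⟨Formula.var p, rfl⟩
    · rw [hDabpab]; exact hpabd
    · intro Δ' hne hss
      have : Δ' = ∅ := Finset.eq_empty_of_ssubset_singleton hss
      exact absurd this (Finset.nonempty_iff_ne_empty.mp hne)
  have hpabU : pab ∈ U Γ := ⟨{pab}, hmin_pab, Finset.mem_singleton_self _⟩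
  -- the model
  have hΓval : ∀ B ∈ Γ, val p [p, q, s, t] B = true := by
    intro B hB
    have hqp : Formula.var q ≠ Formula.var p := by simp [Ne.symm hpq]
    simp only [hΓdef, Gamma1, Set.mem_insert_iff, Set.mem_singleton_iff] at hB
    rcases hB with rfl | rfl | rfl | rfl | rfl <;>
      simp [val, hqp]
  have hDabTrue : ∀ Δ : Finset Formula, ↑Δ ⊆ Omega → Deriv false Γ (Dab Δ) → pab ∈ Δ := by
    intro Δ hΩ hd
    by_contra hpn
    have h1 := sound hd hΓval (piv := p) (vs := [p, q, s, t])
    rw [val_Dab_false p [p, q, s, t] Δ hΩ hpn] at h1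
    exact absurd h1 (by simp)
  have hqabne : qab ≠ pab := by simp [hqab, hpab, hpq.symm]
  -- qab is not unreliable
  have hqabU : qab ∉ U Γ := by
    rintro ⟨Δ, ⟨hne, hΩ, hDab, hminim⟩, hmem⟩
    have hpin : pab ∈ Δ := hDabTrue Δ hΩ hDab
    have hss : {pab} ⊂ Δ := by
      rw [Finset.ssubset_iff_subset_ne]
      refine ⟨Finset.singleton_subset_iff.mpr hpin, fun h => ?_⟩
      exact hqabne (Finset.mem_singleton.mp (h ▸ hmem))
    exact hminim {pab} (Finset.singleton_nonempty _) hss (by rw [hDabpab]; exact hpabd)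
  constructor
  · -- positive part: Δ = {qab}
    refine ⟨{qab}, ?_, ?_, ?_⟩
    · intro x hx
      simp only [Finset.coe_singleton, Set.mem_singleton_iff] at hx
      exact hx ▸ ⟨Formula.var q, rfl⟩
    · ext x
      simp only [Finset.coe_singleton, Set.mem_inter_iff, Set.mem_singleton_iff,
        Set.mem_empty_iff_false, iff_false, not_and]
      rintro rfl
      exact hqabU
    · -- Γ ⊢ s ∨ (q ∧ ~q)
      rw [hDabqab]
      have hcase1 : Deriv false Γ ((Formula.var q).pneg.imp
          ((Formula.var s).disj qab)) :=
        AuxCLuN.comp (Deriv.mp (Deriv.axAndIntro (Formula.var q) (Formula.var q).pneg) hqd)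
          (Deriv.axOrIntroR _ _)
      have hcase2 : Deriv false Γ ((Formula.var s).imp ((Formula.var s).disj qab)) :=
        Deriv.axOrIntroL _ _
      have hdisj : Deriv false Γ ((Formula.var q).pneg.disj (Formula.var s)) :=
        Deriv.prem (by simp [hΓdef, Gamma1])
      exact Deriv.mp (Deriv.mp (Deriv.mp (Deriv.axOrElim _ _ _) hcase1) hcase2) hdisj
  · -- negative part
    rintro ⟨Δ, hΩ, hInter, hd⟩
    have hpn : pab ∉ Δ := by
      intro hpin
      have : pab ∈ (↑Δ ∩ U Γ : Set Formula) := ⟨hpin, hpabU⟩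
      rw [hInter] at this
      exact this
    have h1 := sound hd hΓval (piv := p) (vs := [p, q, s, t])
    have h2 := val_Dab_false p [p, q, s, t] Δ hΩ hpn
    simp [val, h2] at h1
    omega
end

section
/- Let Γ₀ = {p, ~p∨r, q, ~q∨s, ~p}, where p, q, r, s are distinct propositional variables. Then U(Γ₀) = {p ∧ ~p}; moreover there is a finite Δ ⊆ Ω with Δ ∩ U(Γ₀) = ∅ and Γ₀ ⊢_CLuN s ∨ Dab(Δ) (so s is finally ACLuN1-derivable from Γ₀), but there is no finite Δ ⊆ Ω with Δ ∩ U(Γ₀) = ∅ and Γ₀ ⊢_CLuN r ∨ Dab(Δ) (so r is not finally ACLuN1-derivable from Γ₀). -/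
/-- Γ₀ = {p, ~p∨r, q, ~q∨s, ~p}. -/
def Gamma0 (p q r s : ℕ) : Set Formula :=
  {Formula.var p,
   (Formula.var p).pneg.disj (Formula.var r),
   Formula.var q,
   (Formula.var q).pneg.disj (Formula.var s),
   (Formula.var p).pneg}

/-! ### Auxiliary machinery -/

/-- Boolean semantics for CLuN: `v` assigns values to variables, `f A` is the
value of `~A` in case `A` is true (if `A` is false, `~A` is forced true). -/
def pval (v : ℕ → Bool) (f : Formula → Bool) : Formula → Bool
  | Formula.var n => v n
  | Formula.bot => false
  | Formula.imp A B => !pval v f A || pval v f B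
  | Formula.conj A B => pval v f A && pval v f B
  | Formula.disj A B => pval v f A || pval v f B
  | Formula.equiv A B => pval v f A == pval v f B
  | Formula.pneg A => if pval v f A then f A else true

theorem pval_sound {Γ : Set Formula} {A : Formula} (h : Deriv false Γ A)
    (v : ℕ → Bool) (f : Formula → Bool)
    (hΓ : ∀ B ∈ Γ, pval v f B = true) : pval v f A = true := by
  induction h with
  | prem hmem => exact hΓ _ hmem
  | axK A B => simp only [pval]; cases pval v f A <;> cases pval v f B <;> rfl
  | axS A B C =>
      simp only [pval]
      cases pval v f A <;> cases pval v f B <;> cases pval v f C <;> rfl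
  | axPeirce A B => simp only [pval]; cases pval v f A <;> cases pval v f B <;> rfl
  | axAndElimL A B => simp only [pval]; cases pval v f A <;> cases pval v f B <;> rfl
  | axAndElimR A B => simp only [pval]; cases pval v f A <;> cases pval v f B <;> rfl
  | axAndIntro A B => simp only [pval]; cases pval v f A <;> cases pval v f B <;> rfl
  | axOrIntroL A B => simp only [pval]; cases pval v f A <;> cases pval v f B <;> rfl
  | axOrIntroR A B => simp only [pval]; cases pval v f A <;> cases pval v f B <;> rfl
  | axOrElim A B C =>
      simp only [pval]
      cases pval v f A <;> cases pval v f B <;> cases pval v f C <;> rfl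
  | axIffElimL A B => simp only [pval]; cases pval v f A <;> cases pval v f B <;> rfl
  | axIffElimR A B => simp only [pval]; cases pval v f A <;> cases pval v f B <;> rfl
  | axIffIntro A B => simp only [pval]; cases pval v f A <;> cases pval v f B <;> rfl
  | axBot A => simp only [pval]; rfl
  | axEM A => simp only [pval]; cases pval v f A <;> rfl
  | axCL A B hcl => exact absurd hcl (by simp)
  | mp _ _ ih1 ih2 =>
      simp only [pval, ih2, Bool.not_true, Bool.false_or] at ih1
      exact ih1

theorem listDisj_eval (v : ℕ → Bool) (f : Formula → Bool) :
    ∀ l : List Formula, pval v f (listDisj l) = true → ∃ B ∈ l, pval v f B = true := by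
  intro l
  induction l with
  | nil => simp [listDisj, pval]
  | cons A t ih =>
      cases t with
      | nil => intro h; exact ⟨A, by simp, h⟩
      | cons B t' =>
          intro h
          simp only [listDisj, pval, Bool.or_eq_true] at h
          rcases h with h | h
          · exact ⟨A, by simp, h⟩
          · obtain ⟨C, hC, hCv⟩ := ih h
            exact ⟨C, by simp [hC], hCv⟩

theorem Dab_eval {v : ℕ → Bool} {f : Formula → Bool} {Δ : Finset Formula}
    (h : pval v f (Dab Δ) = true) : ∃ B ∈ Δ, pval v f B = true := by
  obtain ⟨B, hB, hBv⟩ := listDisj_eval v f _ h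
  exact ⟨B, (Finset.mem_sort _).mp hB, hBv⟩

theorem Dab_singleton (A : Formula) : Dab {A} = A := by
  simp [Dab, Finset.sort_singleton, listDisj]

theorem Deriv.comp {cl : Bool} {Γ : Set Formula} {A B C : Formula}
    (h1 : Deriv cl Γ (A.imp B)) (h2 : Deriv cl Γ (B.imp C)) :
    Deriv cl Γ (A.imp C) :=
  .mp (.mp (.axS A B C) (.mp (.axK (B.imp C) A) h2)) h1

/-- For pairwise distinct variables p, q, r, s: U(Γ₀) = {p ∧ ~p}; s is finally
ACLuN1-derivable from Γ₀ but r is not. -/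
theorem Gamma0_analysis (p q r s : ℕ)
    (hpq : p ≠ q) (hpr : p ≠ r) (hps : p ≠ s)
    (hqr : q ≠ r) (hqs : q ≠ s) (hrs : r ≠ s) :
    U (Gamma0 p q r s) = {(Formula.var p).conj (Formula.var p).pneg} ∧
    (∃ Δ : Finset Formula, ↑Δ ⊆ Omega ∧ (↑Δ ∩ U (Gamma0 p q r s) : Set Formula) = ∅ ∧
      CLuN (Gamma0 p q r s) ((Formula.var s).disj (Dab Δ))) ∧
    ¬ (∃ Δ : Finset Formula, ↑Δ ⊆ Omega ∧ (↑Δ ∩ U (Gamma0 p q r s) : Set Formula) = ∅ ∧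
      CLuN (Gamma0 p q r s) ((Formula.var r).disj (Dab Δ))) := by
  set pp : Formula := (Formula.var p).conj (Formula.var p).pneg with hpp_def
  set qq : Formula := (Formula.var q).conj (Formula.var q).pneg with hqq_def
  -- the countermodel: all variables true except r; ~A true exactly when A false or A = var p
  set v : ℕ → Bool := fun n => decide (n ≠ r) with hv_def
  set f : Formula → Bool := fun A => decide (A = Formula.var p) with hf_def
  have hvp : v p = true := by simp [hv_def, hpr]
  have hmodel : ∀ B ∈ Gamma0 p q r s, pval v f B = true := by
    intro B hB
    rcases hB with h | h | h | h | h
    · subst h; simpa [pval] using hvp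
    · subst h; simp [pval, hvp, hf_def]
    · subst h; simp [pval, hv_def, hqr]
    · subst h
      simp [pval, hv_def, hqr, Ne.symm hrs, hf_def, hpq]
    · subst h; simp [pval, hvp, hf_def]
  have habn : ∀ B ∈ Omega, B ≠ pp → pval v f B = false := by
    rintro B ⟨A, rfl⟩ hne
    simp only [pval]
    cases hA : pval v f A with
    | false => simp
    | true =>
        simp only [hA, if_true, Bool.true_and, hf_def]
        have : A ≠ Formula.var p := by
          intro h; exact hne (by rw [hpp_def, h])
        simp [this]
  have hnoDab : ∀ Δ : Finset Formula, ↑Δ ⊆ Omega → pp ∉ Δ →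
      ¬ CLuN (Gamma0 p q r s) (Dab Δ) := by
    intro Δ hΩ hppΔ hder
    obtain ⟨B, hB, hBv⟩ := Dab_eval (pval_sound hder v f hmodel)
    have : pval v f B = false := habn B (hΩ hB) (fun h => hppΔ (h ▸ hB))
    rw [this] at hBv; exact Bool.false_ne_true hBv
  have hpp_mem_Omega : pp ∈ Omega := ⟨Formula.var p, rfl⟩
  have hp_prem : CLuN (Gamma0 p q r s) (Formula.var p) := .prem (by left; rfl)
  have hnp_prem : CLuN (Gamma0 p q r s) (Formula.var p).pneg :=
    .prem (by right; right; right; right; rfl)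
  have hpp_der : CLuN (Gamma0 p q r s) pp :=
    .mp (.mp (.axAndIntro _ _) hp_prem) hnp_prem
  have hDabpp : CLuN (Gamma0 p q r s) (Dab {pp}) := by rw [Dab_singleton]; exact hpp_der
  -- U(Γ₀) = {pp}
  have hU : U (Gamma0 p q r s) = {pp} := by
    ext A
    constructor
    · rintro ⟨Δ, ⟨hne, hΩ, hder, hmin⟩, hA⟩
      have hppΔ : pp ∈ Δ := by
        by_contra h
        exact hnoDab Δ hΩ h hder
      have hAeq : A = pp := by
        by_contra hAne
        have hss : ({pp} : Finset Formula) ⊂ Δ := by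
          constructor
          · simp [hppΔ]
          · intro hsub
            have := hsub hA
            simp only [Finset.mem_singleton] at this
            exact hAne this
        exact hmin {pp} ⟨pp, Finset.mem_singleton_self pp⟩ hss hDabpp
      exact hAeq
    · rintro rfl
      refine ⟨{pp}, ⟨⟨pp, Finset.mem_singleton_self pp⟩, ?_, hDabpp, ?_⟩,
        Finset.mem_singleton_self pp⟩
      · intro B hB
        simp only [Finset.coe_singleton, Set.mem_singleton_iff] at hB
        exact hB ▸ hpp_mem_Omega
      · intro Δ' hne' hss'
        exfalso
        rcases Finset.eq_empty_or_nonempty Δ' with h | h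
        · exact hne'.ne_empty h
        · obtain ⟨x, hx⟩ := h
          have hsub := hss'.1 hx
          simp only [Finset.mem_singleton] at hsub
          subst hsub
          exact hss'.2 (Finset.singleton_subset_iff.mpr hx)
  refine ⟨hU, ?_, ?_⟩
  · -- s is finally derivable, with Δ = {qq}
    refine ⟨{qq}, ?_, ?_, ?_⟩
    · intro B hB
      simp only [Finset.coe_singleton, Set.mem_singleton_iff] at hB
      exact hB ▸ ⟨Formula.var q, rfl⟩
    · rw [hU]
      ext B
      simp only [Finset.coe_singleton, Set.mem_inter_iff, Set.mem_singleton_iff,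
        Set.mem_empty_iff_false, iff_false, not_and]
      rintro rfl h
      rw [hqq_def, hpp_def] at h
      injection h with h1 h2
      injection h1 with h3
      exact hpq h3.symm
    · -- Γ₀ ⊢ s ∨ qq
      have hq : CLuN (Gamma0 p q r s) (Formula.var q) := .prem (by right; right; left; rfl)
      have hnqs : CLuN (Gamma0 p q r s) ((Formula.var q).pneg.disj (Formula.var s)) :=
        .prem (by right; right; right; left; rfl)
      set S := Formula.var s
      set C := S.disj qq with hC_def
      have h3 : CLuN (Gamma0 p q r s) ((Formula.var q).pneg.imp qq) :=
        .mp (.axAndIntro _ _) hq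
      have h5 : CLuN (Gamma0 p q r s) ((Formula.var q).pneg.imp C) :=
        h3.comp (.axOrIntroR S qq)
      have h6 : CLuN (Gamma0 p q r s) (S.imp C) := .axOrIntroL S qq
      have h7 : CLuN (Gamma0 p q r s) (((Formula.var q).pneg.disj S).imp C) :=
        .mp (.mp (.axOrElim _ _ _) h5) h6
      have : CLuN (Gamma0 p q r s) C := .mp h7 hnqs
      rw [hC_def] at this
      rw [Dab_singleton]
      exact this
  · -- r is not finally derivable
    rintro ⟨Δ, hΩ, hInt, hder⟩
    have hppΔ : pp ∉ Δ := by
      intro h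
      have : pp ∈ (↑Δ ∩ U (Gamma0 p q r s) : Set Formula) := ⟨h, by rw [hU]; rfl⟩
      rw [hInt] at this
      exact this
    have hval := pval_sound hder v f hmodel
    simp only [pval, hv_def, Bool.or_eq_true] at hval
    rcases hval with h | h
    · simp at h
    · obtain ⟨B, hB, hBv⟩ := Dab_eval h
      have : pval v f B = false := habn B (hΩ hB) (fun he => hppΔ (he ▸ hB))
      rw [this] at hBv; exact Bool.false_ne_true hBv
end
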